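/- Let m₁, m₂ ≥ 2 be integers, q, s ∈ (0,1), ρ ∈ [−1,1], δ ∈ {−1,1}, α = β = 0. Then for each k ∈ {0,…,m₁−1}, the sum over l ∈ {0,…,m₂−1} of the unnormalized BWG mass (q^{k} + q^{m₁−k})(s^{l} + s^{m₂−l})·(1 + ρ·cos(2πk/m₁ − δ·2πl/m₂)) equals ((1−s^{m₂})(1+s)/(1−s)) · (q^k + q^{m₁−k}) · [1 + ρ·((1−s)²/(s² − 2s·cos(2π/m₂) + 1))·cos(2πk/m₁)]. -/

import Mathlib

open Real Finset

lemma geom1 (n : ℕ) (s : ℝ) (hs : s ≠ 1) :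
    ∑ l ∈ Finset.range n, s ^ l = (1 - s ^ n) / (1 - s) := by
  rw [geom_sum_eq hs]
  rw [div_eq_div_iff (sub_ne_zero.mpr hs) (sub_ne_zero.mpr (Ne.symm hs))]
  ring

lemma geom2 (n : ℕ) (s : ℝ) (hs : s ≠ 1) :
    ∑ l ∈ Finset.range n, s ^ (n - l) = s * ((1 - s ^ n) / (1 - s)) := by
  rw [← Finset.sum_range_reflect]
  have h : ∀ l ∈ Finset.range n, s ^ (n - (n - 1 - l)) = s * s ^ l := by
    intro l hl
    rw [Finset.mem_range] at hl
    have : n - (n - 1 - l) = l + 1 := by omega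
    rw [this, pow_succ]; ring
  rw [Finset.sum_congr rfl h, ← Finset.mul_sum, geom1 n s hs]


lemma csum (n : ℕ) (s : ℝ) (z : ℂ) (hn : 1 ≤ n) (hs0 : 0 < s) (hs1 : s < 1)
    (hz : z ^ n = 1) (habs : ‖z‖ = 1)
    (h2 : 1 + z ^ 2 = 2 * z * (Real.cos (2 * π / n) : ℂ)) :
    ∑ l ∈ Finset.range n, (((s : ℝ) ^ l + s ^ (n - l) : ℝ) : ℂ) * z ^ l =
      (((1 - s ^ n) * (1 - s ^ 2) / (s ^ 2 - 2 * s * Real.cos (2 * π / n) + 1) : ℝ) : ℂ) := by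
  have hz0 : z ≠ 0 := by
    intro h; rw [h] at habs; simp at habs
  have hsz : (1 : ℂ) - s * z ≠ 0 := by
    intro h
    have : ‖(s : ℂ) * z‖ = s := by
      rw [norm_mul, habs, mul_one, Complex.norm_real, Real.norm_eq_abs, abs_of_pos hs0]
    have h1 : (s : ℂ) * z = 1 := by linear_combination -h
    rw [h1] at this; simp at this; linarith
  have hzs : z - (s : ℂ) ≠ 0 := by
    intro h
    have h1 : z = (s : ℂ) := by linear_combination h
    rw [h1, Complex.norm_real, Real.norm_eq_abs, abs_of_pos hs0] at habs; linarith
  have hden : (0 : ℝ) < s ^ 2 - 2 * s * Real.cos (2 * π / n) + 1 := by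
    nlinarith [Real.cos_le_one (2 * π / n), sq_nonneg (1 - s)]
  have hdenC : ((s : ℂ) ^ 2 - 2 * s * (Real.cos (2 * π / n) : ℂ) + 1) ≠ 0 := by
    have : ((s ^ 2 - 2 * s * Real.cos (2 * π / n) + 1 : ℝ) : ℂ) ≠ 0 := by
      exact_mod_cast ne_of_gt hden
    convert this using 1
    push_cast [-Complex.ofReal_cos]
    ring
  -- split the sum
  have e1 : ∑ l ∈ Finset.range n, ((s : ℂ)) ^ l * z ^ l = (1 - (s:ℂ) ^ n) / (1 - s * z) := by
    simp_rw [← mul_pow]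
    rw [geom_sum_eq (by intro h; exact hsz (by rw [h]; ring)) n, mul_pow, hz, mul_one]
    rw [div_eq_div_iff (by intro h; exact hsz (by linear_combination -h)) hsz]
    ring
  have e2 : ∑ l ∈ Finset.range n, ((s : ℂ)) ^ (n - l) * z ^ l
      = (s : ℂ) * (1 - (s:ℂ) ^ n) / (z - s) := by
    have hsC : (s : ℂ) ≠ 0 := by
      simpa using ne_of_gt hs0
    have key : ∀ l ∈ Finset.range n, ((s : ℂ)) ^ (n - l) * z ^ l
        = (s : ℂ) ^ n * (z / s) ^ l := by
      intro l hl
      rw [Finset.mem_range] at hl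
      rw [pow_sub₀ _ hsC (le_of_lt hl), div_pow]
      field_simp
    rw [Finset.sum_congr rfl key, ← Finset.mul_sum,
      geom_sum_eq (by
        intro h
        exact hzs (by field_simp at h; linear_combination h) ) n]
    rw [div_pow, hz]
    have hsn : (s : ℂ) ^ n ≠ 0 := pow_ne_zero _ hsC
    field_simp
  have hsplit : ∑ l ∈ Finset.range n, (((s : ℝ) ^ l + s ^ (n - l) : ℝ) : ℂ) * z ^ l
      = (1 - (s:ℂ) ^ n) / (1 - s * z) + (s : ℂ) * (1 - (s:ℂ) ^ n) / (z - s) := by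
    rw [← e1, ← e2, ← Finset.sum_add_distrib]
    apply Finset.sum_congr rfl
    intro l _
    push_cast
    ring
  rw [hsplit]
  push_cast [-Complex.ofReal_cos]
  rw [div_add_div _ _ hsz hzs, div_eq_div_iff (mul_ne_zero hsz hzs) hdenC]
  linear_combination ((1:ℂ) - (s:ℂ)^n) * (1 - (s:ℂ)^2) * (s:ℂ) * h2


lemma bwg_key (n : ℕ) (hn : 2 ≤ n) (s θ δ : ℝ) (hs0 : 0 < s) (hs1 : s < 1)
    (hδ : δ = 1 ∨ δ = -1) :
    ∑ l ∈ Finset.range n, (s ^ l + s ^ (n - l)) * Real.cos (θ - δ * (2 * π * l / n)) =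
      (1 - s ^ n) * (1 - s ^ 2) / (s ^ 2 - 2 * s * Real.cos (2 * π / n) + 1) * Real.cos θ := by
  have hn0 : (n : ℝ) ≠ 0 := by positivity
  set c : ℝ := 2 * π / n with hc_def
  set z : ℂ := Complex.exp ((-δ * c : ℝ) * Complex.I) with hz_def
  have habs : ‖z‖ = 1 := Complex.norm_exp_ofReal_mul_I _
  have hcn : (n : ℝ) * c = 2 * π := by rw [hc_def]; field_simp
  have hz : z ^ n = 1 := by
    rw [hz_def, ← Complex.exp_nat_mul]
    rcases hδ with h | h <;> subst h
    · rw [show (n : ℂ) * ((-(1:ℝ) * c : ℝ) * Complex.I)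
          = ((-1 : ℤ) : ℂ) * (2 * π * Complex.I) by
        push_cast
        have : (n : ℂ) * (c : ℂ) = 2 * π := by exact_mod_cast congrArg Complex.ofReal hcn
        linear_combination -Complex.I * this]
      exact Complex.exp_int_mul_two_pi_mul_I (-1)
    · rw [show (n : ℂ) * ((-(-1:ℝ) * c : ℝ) * Complex.I)
          = ((1 : ℤ) : ℂ) * (2 * π * Complex.I) by
        push_cast
        have : (n : ℂ) * (c : ℂ) = 2 * π := by exact_mod_cast congrArg Complex.ofReal hcn
        linear_combination Complex.I * this]
      exact Complex.exp_int_mul_two_pi_mul_I 1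
  have h2 : 1 + z ^ 2 = 2 * z * (Real.cos c : ℂ) := by
    have t := Complex.two_cos (c : ℂ)
    rw [Complex.ofReal_cos]
    rcases hδ with h | h <;> subst h
    · have e1 : z * Complex.exp ((c : ℂ) * Complex.I) = 1 := by
        rw [hz_def, ← Complex.exp_add,
          show ((-(1:ℝ) * c : ℝ) : ℂ) * Complex.I + (c : ℂ) * Complex.I = 0 by
            push_cast; ring,
          Complex.exp_zero]
      have e2 : z * Complex.exp (-(c : ℂ) * Complex.I) = z ^ 2 := by
        rw [hz_def, ← Complex.exp_add, sq, ← Complex.exp_add]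
        congr 1
        push_cast; ring
      linear_combination -e1 - e2 - z * t
    · have e1 : z * Complex.exp (-(c : ℂ) * Complex.I) = 1 := by
        rw [hz_def, ← Complex.exp_add,
          show ((-(-1:ℝ) * c : ℝ) : ℂ) * Complex.I + -(c : ℂ) * Complex.I = 0 by
            push_cast; ring,
          Complex.exp_zero]
      have e2 : z * Complex.exp ((c : ℂ) * Complex.I) = z ^ 2 := by
        rw [hz_def, ← Complex.exp_add, sq, ← Complex.exp_add]
        congr 1
        push_cast; ring
      linear_combination -e1 - e2 - z * t
  have hterm : ∀ l ∈ Finset.range n,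
      (s ^ l + s ^ (n - l)) * Real.cos (θ - δ * (2 * π * l / n))
        = (((s ^ l + s ^ (n - l) : ℝ)) : ℂ).re * (Complex.exp ((θ : ℝ) * Complex.I) * z ^ l).re
          + 0 := by
    intro l _
    rw [add_zero, Complex.ofReal_re]
    congr 1
    rw [hz_def, ← Complex.exp_nat_mul, ← Complex.exp_add,
      show (θ : ℂ) * Complex.I + (l : ℂ) * (((-δ * c : ℝ)) * Complex.I)
        = ((θ - δ * (2 * π * l / n) : ℝ)) * Complex.I by
          rw [hc_def]; push_cast; field_simp; ring,
      Complex.exp_ofReal_mul_I_re]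
  rw [Finset.sum_congr rfl hterm]
  have hre : ∀ l ∈ Finset.range n,
      (((s ^ l + s ^ (n - l) : ℝ)) : ℂ).re * (Complex.exp ((θ : ℝ) * Complex.I) * z ^ l).re + 0
        = ((((s ^ l + s ^ (n - l) : ℝ)) : ℂ) * (Complex.exp ((θ : ℝ) * Complex.I) * z ^ l)).re := by
    intro l _
    rw [add_zero, Complex.ofReal_re, Complex.re_ofReal_mul]
  rw [Finset.sum_congr rfl hre, ← Complex.re_sum]
  have : ∑ l ∈ Finset.range n,
      (((s ^ l + s ^ (n - l) : ℝ)) : ℂ) * (Complex.exp ((θ : ℝ) * Complex.I) * z ^ l)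
      = Complex.exp ((θ : ℝ) * Complex.I)
        * (((1 - s ^ n) * (1 - s ^ 2) / (s ^ 2 - 2 * s * Real.cos (2 * π / n) + 1) : ℝ) : ℂ) := by
    rw [← csum n s z (by omega) hs0 hs1 hz habs (by rw [← hc_def]; exact h2), Finset.mul_sum]
    apply Finset.sum_congr rfl
    intro l _
    ring
  rw [this, mul_comm, Complex.re_ofReal_mul, Complex.exp_ofReal_mul_I_re]

theorem bwg_marginal_sum (m₁ m₂ : ℕ) (hm₁ : 2 ≤ m₁) (hm₂ : 2 ≤ m₂)
    (q s ρ δ : ℝ) (hq0 : 0 < q) (hq1 : q < 1) (hs0 : 0 < s) (hs1 : s < 1)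
    (hρ₁ : -1 ≤ ρ) (hρ₂ : ρ ≤ 1) (hδ : δ = 1 ∨ δ = -1) :
    ∀ k : ℕ, k < m₁ →
      (∑ l ∈ Finset.range m₂,
          (q ^ k + q ^ (m₁ - k)) * (s ^ l + s ^ (m₂ - l)) *
            (1 + ρ * Real.cos (2 * π * k / m₁ - δ * (2 * π * l / m₂)))) =
        ((1 - s ^ m₂) * (1 + s) / (1 - s)) * (q ^ k + q ^ (m₁ - k)) *
          (1 + ρ * ((1 - s) ^ 2 / (s ^ 2 - 2 * s * Real.cos (2 * π / m₂) + 1)) *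
            Real.cos (2 * π * k / m₁)) := by
  intro k hk
  set Q : ℝ := q ^ k + q ^ (m₁ - k) with hQ
  set θ : ℝ := 2 * π * k / m₁ with hθ
  have hs1' : s ≠ 1 := ne_of_lt hs1
  have hden : (0 : ℝ) < s ^ 2 - 2 * s * Real.cos (2 * π / m₂) + 1 := by
    nlinarith [Real.cos_le_one (2 * π / m₂), sq_nonneg (1 - s)]
  have step : ∀ l ∈ Finset.range m₂,
      Q * (s ^ l + s ^ (m₂ - l)) * (1 + ρ * Real.cos (θ - δ * (2 * π * l / m₂)))
        = Q * (s ^ l + s ^ (m₂ - l))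
          + Q * ρ * ((s ^ l + s ^ (m₂ - l)) * Real.cos (θ - δ * (2 * π * l / m₂))) := by
    intro l _; ring
  rw [Finset.sum_congr rfl step, Finset.sum_add_distrib, ← Finset.mul_sum, ← Finset.mul_sum,
    Finset.sum_add_distrib, geom1 m₂ s hs1', geom2 m₂ s hs1',
    bwg_key m₂ hm₂ s θ δ hs0 hs1 hδ]
  have h1s : (1 : ℝ) - s ≠ 0 := sub_ne_zero.mpr (Ne.symm hs1')
  field_simp
  ring
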